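/- Let δ > 0, ρ > 0, r ≥ 1 and let h : ℕ → ℝ satisfy h k ≥ 0 for all k, h 1 = 0, and, for every k with 2 ≤ k ≤ r, h k ≤ (1/ρ) ∑_{l=1}^{k−1} (δ + h l)(2δ + h (k−l)). Then for every k with 1 ≤ k ≤ r one has h k ≤ δ · P_{k−1}(δ/ρ). -/

import Mathlib

/-- the scalar majorant recursion is bounded by `δ · P_{k-1}(δ/ρ)`. -/
theorem scalar_recursion_polynomial_bound
    (δ ρ : ℝ) (hδ : 0 < δ) (hρ : 0 < ρ) (r : ℕ) (hr : 1 ≤ r)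
    (P : ℕ → Polynomial ℝ)
    (hP0 : P 0 = 0)
    (hP1 : P 1 = Polynomial.C 2 * Polynomial.X)
    (hPk : ∀ k, 2 ≤ k → P k =
      Polynomial.C (2 * (k : ℝ)) * Polynomial.X
        + ∑ l ∈ Finset.Icc 2 k, Polynomial.C 3 * Polynomial.X * P (l - 1)
        + ∑ l ∈ Finset.Icc 2 (k - 1), Polynomial.X * P (l - 1) * P (k - l))
    (h : ℕ → ℝ) (hpos : ∀ k, 0 ≤ h k) (h1 : h 1 = 0)
    (hrec : ∀ k, 2 ≤ k → k ≤ r →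
      h k ≤ (1 / ρ) * ∑ l ∈ Finset.Ico 1 k, (δ + h l) * (2 * δ + h (k - l))) :
    ∀ k, 1 ≤ k → k ≤ r → h k ≤ δ * (P (k - 1)).eval (δ / ρ) := by
  set x : ℝ := δ / ρ with hxdef
  have hx : 0 < x := div_pos hδ hρ
  set Q : ℕ → ℝ := fun k => (P k).eval x with hQdef
  have hQ0 : Q 0 = 0 := by simp [hQdef, hP0]
  -- key identity
  have key : ∀ m : ℕ, 1 ≤ m →
      Q m = x * ∑ l ∈ Finset.Ico 1 (m + 1), (1 + Q (l - 1)) * (2 + Q (m - l)) := by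
    intro m hm
    rcases eq_or_lt_of_le hm with hm1 | hm2
    · rw [← hm1]
      rw [show Finset.Ico 1 2 = {1} from rfl]
      simp [hQdef, hP1, hP0]
      ring
    · have hm2 : 2 ≤ m := hm2
      have hA : ∑ l ∈ Finset.Ico 1 (m + 1), Q (l - 1) = ∑ j ∈ Finset.range m, Q j := by
        rw [Finset.sum_Ico_eq_sum_range]
        simp
      have hB : ∑ l ∈ Finset.Ico 1 (m + 1), Q (m - l) = ∑ j ∈ Finset.range m, Q j := by
        rw [Finset.sum_Ico_eq_sum_range]
        simp only [Nat.add_sub_cancel]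
        rw [← Finset.sum_range_reflect (fun j => Q j) m]
        exact Finset.sum_congr rfl fun j hj => by
          simp only [Finset.mem_range] at hj
          congr 1
          omega
      have hA2 : ∑ l ∈ Finset.Icc 2 m, Q (l - 1) = ∑ j ∈ Finset.range m, Q j := by
        rw [← hA, ← Finset.Ico_add_one_right_eq_Icc 2 m,
          Finset.sum_eq_sum_Ico_succ_bot (by omega : 1 < m + 1) (fun l => Q (l - 1))]
        simp [hQ0]
      have hC : ∑ l ∈ Finset.Ico 1 (m + 1), Q (l - 1) * Q (m - l)
          = ∑ l ∈ Finset.Icc 2 (m - 1), Q (l - 1) * Q (m - l) := by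
        rw [Finset.sum_eq_sum_Ico_succ_bot (by omega : 1 < m + 1)
            (fun l => Q (l - 1) * Q (m - l)),
          Finset.sum_Ico_succ_top (by omega : 2 ≤ m) (fun l => Q (l - 1) * Q (m - l))]
        rw [show Finset.Ico 2 m = Finset.Icc 2 (m - 1) by
          rw [← Finset.Ico_add_one_right_eq_Icc]; congr 1; omega]
        simp [hQ0]
      set A := ∑ j ∈ Finset.range m, Q j with hAdef
      set Cs := ∑ l ∈ Finset.Icc 2 (m - 1), Q (l - 1) * Q (m - l) with hCdef
      have hL : Q m = 2 * m * x + 3 * x * A + x * Cs := by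
        simp only [hQdef, hPk m hm2, Polynomial.eval_add, Polynomial.eval_mul,
          Polynomial.eval_C, Polynomial.eval_X, Polynomial.eval_finset_sum]
        rw [← Finset.mul_sum]
        simp only [mul_assoc]
        rw [← Finset.mul_sum]
        rw [show (∑ i ∈ Finset.Icc 2 m, Polynomial.eval x (P (i - 1))) = A from hA2,
          show (∑ i ∈ Finset.Icc 2 (m - 1),
            Polynomial.eval x (P (i - 1)) * Polynomial.eval x (P (m - i))) = Cs from rfl]
      have hR : x * ∑ l ∈ Finset.Ico 1 (m + 1), (1 + Q (l - 1)) * (2 + Q (m - l))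
          = 2 * m * x + 3 * x * A + x * Cs := by
        have e1 : ∑ l ∈ Finset.Ico 1 (m + 1), (1 + Q (l - 1)) * (2 + Q (m - l))
            = ∑ l ∈ Finset.Ico 1 (m + 1),
              (2 + 2 * Q (l - 1) + Q (m - l) + Q (l - 1) * Q (m - l)) :=
          Finset.sum_congr rfl fun l _ => by ring
        rw [e1]
        rw [Finset.sum_add_distrib, Finset.sum_add_distrib, Finset.sum_add_distrib,
          Finset.sum_const, ← Finset.mul_sum, hA, hB, hC, Nat.card_Ico]
        simp only [Nat.add_sub_cancel, nsmul_eq_mul]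
        push_cast
        ring
      rw [hL, hR]
  -- nonnegativity of Q
  have hQnn : ∀ m, 0 ≤ Q m := by
    intro m
    induction m using Nat.strong_induction_on with
    | _ m ih =>
      rcases Nat.eq_zero_or_pos m with h0 | h1'
      · rw [h0, hQ0]
      · rw [key m h1']
        apply mul_nonneg hx.le
        apply Finset.sum_nonneg
        intro l hl
        simp only [Finset.mem_Ico] at hl
        have i1 := ih (l - 1) (by omega)
        have i2 := ih (m - l) (by omega)
        have : (0:ℝ) ≤ 1 + Q (l - 1) := by linarith
        have : (0:ℝ) ≤ 2 + Q (m - l) := by linarith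
        positivity
  -- main induction
  have main : ∀ k, 1 ≤ k → k ≤ r → h k ≤ δ * Q (k - 1) := by
    intro k
    induction k using Nat.strong_induction_on with
    | _ k ih =>
      intro hk1 hkr
      rcases eq_or_lt_of_le hk1 with hk | hk2
      · rw [← hk]
        simp [h1, hQ0]
      · have hk2 : 2 ≤ k := hk2
        have step2 : ∑ l ∈ Finset.Ico 1 k, (δ + h l) * (2 * δ + h (k - l))
            ≤ ∑ l ∈ Finset.Ico 1 k, (δ * (1 + Q (l - 1))) * (δ * (2 + Q (k - 1 - l))) := by
          apply Finset.sum_le_sum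
          intro l hl
          simp only [Finset.mem_Ico] at hl
          have hl1 : h l ≤ δ * Q (l - 1) := ih l (by omega) (by omega) (by omega)
          have hl2 : h (k - l) ≤ δ * Q (k - l - 1) :=
            ih (k - l) (by omega) (by omega) (by omega)
          have e : k - l - 1 = k - 1 - l := by omega
          rw [← e]
          have n1 := hQnn (l - 1)
          have n2 := hQnn (k - l - 1)
          apply mul_le_mul
          · linarith
          · linarith
          · linarith [hpos (k - l)]
          · positivity
        calc h k ≤ (1 / ρ) * ∑ l ∈ Finset.Ico 1 k, (δ + h l) * (2 * δ + h (k - l)) :=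
              hrec k hk2 hkr
          _ ≤ (1 / ρ) * ∑ l ∈ Finset.Ico 1 k,
              (δ * (1 + Q (l - 1))) * (δ * (2 + Q (k - 1 - l))) :=
              mul_le_mul_of_nonneg_left step2 (by positivity)
          _ = δ * (x * ∑ l ∈ Finset.Ico 1 k, (1 + Q (l - 1)) * (2 + Q (k - 1 - l))) := by
              rw [Finset.mul_sum, Finset.mul_sum, Finset.mul_sum]
              apply Finset.sum_congr rfl
              intro l hl
              rw [hxdef]
              field_simp
          _ = δ * Q (k - 1) := by
              rw [key (k - 1) (by omega), show k - 1 + 1 = k from by omega]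
  intro k hk1 hkr
  have := main k hk1 hkr
  simpa [hQdef] using this
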